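/- The asymptotic density of {n ∈ ℕ : s₂(n+1) - s₂(n) = d} equals 2^{d-2} for every integer d ≤ 1, and equals 0 for d ≥ 2. In other words, μ₁(d) = 2^{d-2}·1_{d≤1}. -/

import Mathlib

open Filter

/-- `s₂ n` is the number of 1's in the binary expansion of `n`. -/
def s2 (n : ℕ) : ℕ := (Nat.digits 2 n).sum

/-- The counting sequence whose limit is the asymptotic density
`μ_a(d)` of `{n : s₂(n+a) - s₂(n) = d}`. -/
noncomputable def densSeq (a : ℕ) (d : ℤ) (N : ℕ) : ℝ :=
  (((Finset.range N).filter fun n => (s2 (n + a) : ℤ) - s2 n = d).card : ℝ) / N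

lemma s2_two_mul (n : ℕ) : s2 (2 * n) = s2 n := by
  rcases Nat.eq_zero_or_pos n with h | h
  · simp [h]
  · unfold s2
    rw [show 2 * n = 2 * n + 0 by ring, Nat.digits_def' (by norm_num) (by omega)]
    simp [Nat.mul_div_cancel_left _ (by norm_num : 0 < 2), Nat.mul_mod_right]

lemma s2_two_mul_add_one (n : ℕ) : s2 (2 * n + 1) = s2 n + 1 := by
  unfold s2
  rw [Nat.digits_def' (by norm_num) (by omega)]
  simp [Nat.add_mul_div_left, Nat.add_mul_mod_self_left, Nat.add_comm]

lemma s2_pow_mul (k m : ℕ) : s2 (2 ^ k * m) = s2 m := by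
  induction k with
  | zero => simp
  | succ k ih => rw [pow_succ, mul_comm (2^k) 2, mul_assoc, s2_two_mul, ih]

lemma s2_pow_mul_add (k q : ℕ) : s2 (2 ^ k * q + (2 ^ k - 1)) = s2 q + k := by
  induction k with
  | zero => simp
  | succ k ih =>
    have h : 2 ^ (k+1) * q + (2 ^ (k+1) - 1) = 2 * (2 ^ k * q + (2 ^ k - 1)) + 1 := by
      have : 1 ≤ 2 ^ k := Nat.one_le_two_pow
      ring_nf
      omega
    rw [h, s2_two_mul_add_one, ih]; ring

lemma s2_succ_sub (n : ℕ) :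
    (s2 (n + 1) : ℤ) - s2 n = 1 - padicValNat 2 (n + 1) := by
  set k := padicValNat 2 (n + 1) with hk
  obtain ⟨m, hm⟩ : 2 ^ k ∣ (n + 1) := pow_padicValNat_dvd
  have hmodd : ¬ 2 ∣ m := by
    intro ⟨t, ht⟩
    have : 2 ^ (k+1) ∣ (n+1) := ⟨t, by rw [hm, ht]; ring⟩
    exact pow_succ_padicValNat_not_dvd (by omega) this
  obtain ⟨t, ht⟩ : ∃ t, m = 2 * t + 1 := ⟨m / 2, by omega⟩
  subst ht
  have h1 : s2 (n + 1) = s2 t + 1 := by rw [hm, s2_pow_mul, s2_two_mul_add_one]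
  have hn : n = 2 ^ k * (2 * t) + (2 ^ k - 1) := by
    have h2k : 1 ≤ 2 ^ k := Nat.one_le_two_pow
    rw [Nat.mul_add, Nat.mul_one] at hm
    set A := 2 ^ k * (2 * t)
    omega
  have h2 : s2 n = s2 t + k := by rw [hn, s2_pow_mul_add, s2_two_mul]
  rw [h1, h2]
  push_cast
  ring

-- the key equivalence
lemma cond_iff (n : ℕ) (d : ℤ) :
    ((s2 (n + 1) : ℤ) - s2 n = d) ↔ (padicValNat 2 (n + 1) : ℤ) = 1 - d := by
  rw [s2_succ_sub]; omega

lemma padic_eq_iff_mod (n k : ℕ) :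
    padicValNat 2 (n + 1) = k ↔ (n + 1) % 2 ^ (k + 1) = 2 ^ k := by
  constructor
  · intro h
    obtain ⟨m, hm⟩ : 2 ^ k ∣ (n + 1) := h ▸ pow_padicValNat_dvd
    have hmodd : ¬ 2 ∣ m := by
      intro ⟨t, ht⟩
      have h2 : 2 ^ (k+1) ∣ (n+1) := ⟨t, by rw [hm, ht]; ring⟩
      rw [← h] at h2
      exact pow_succ_padicValNat_not_dvd (by omega) h2
    obtain ⟨t, ht⟩ : ∃ t, m = 2 * t + 1 := ⟨m / 2, by omega⟩
    have : n + 1 = 2 ^ (k+1) * t + 2 ^ k := by rw [hm, ht]; ring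
    rw [this, Nat.mul_comm, Nat.add_comm, Nat.add_mul_mod_self_right]
    exact Nat.mod_eq_of_lt (Nat.pow_lt_pow_right (by norm_num) (by omega))
  · intro h
    obtain ⟨q, hq⟩ : ∃ q, n + 1 = 2 ^ (k+1) * q + 2 ^ k := by
      refine ⟨(n+1) / 2 ^ (k+1), ?_⟩
      conv_lhs => rw [← Nat.div_add_mod (n+1) (2^(k+1))]
      rw [h]
    have hfac : n + 1 = 2 ^ k * (2 * q + 1) := by rw [hq]; ring
    haveI : Fact (Nat.Prime 2) := ⟨by norm_num⟩
    rw [hfac, padicValNat.mul (by positivity) (by omega), padicValNat.prime_pow,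
      padicValNat.eq_zero_of_not_dvd (by omega), Nat.add_zero]

lemma mod_succ_iff (n k : ℕ) :
    (n + 1) % 2 ^ (k + 1) = 2 ^ k ↔ n % 2 ^ (k + 1) = 2 ^ k - 1 := by
  have h1 : 1 ≤ 2 ^ k := Nat.one_le_two_pow
  have hlt : 2 ^ k - 1 < 2 ^ (k + 1) := by
    have : 2 ^ k < 2 ^ (k+1) := Nat.pow_lt_pow_right (by norm_num) (by omega)
    omega
  constructor
  · intro h
    obtain ⟨q, hq⟩ : ∃ q, n + 1 = 2 ^ (k+1) * q + 2 ^ k :=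
      ⟨(n+1) / 2 ^ (k+1), by conv_lhs => rw [← Nat.div_add_mod (n+1) (2^(k+1)), h]⟩
    have hn : n = 2 ^ (k+1) * q + (2 ^ k - 1) := by
      set A := 2 ^ (k+1) * q; omega
    rw [hn, Nat.mul_add_mod, Nat.mod_eq_of_lt hlt]
  · intro h
    obtain ⟨q, hq⟩ : ∃ q, n = 2 ^ (k+1) * q + (2 ^ k - 1) :=
      ⟨n / 2 ^ (k+1), by conv_lhs => rw [← Nat.div_add_mod n (2^(k+1)), h]⟩
    have hn : n + 1 = 2 ^ (k+1) * q + 2 ^ k := by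
      set A := 2 ^ (k+1) * q; omega
    rw [hn, Nat.mul_add_mod,
      Nat.mod_eq_of_lt (Nat.pow_lt_pow_right (by norm_num) (by omega))]

/-- μ₁(d) = 2^{d-2} for d ≤ 1, and 0 for d ≥ 2. -/
theorem mu_one_eq (d : ℤ) :
    Tendsto (densSeq 1 d) atTop
      (nhds (if d ≤ 1 then (2 : ℝ) ^ (d - 2) else 0)) := by
  by_cases hd : d ≤ 1
  · rw [if_pos hd]
    set k := (1 - d).toNat with hkdef
    have hkd : (k : ℤ) = 1 - d := Int.toNat_of_nonneg (by omega)
    set M := 2 ^ (k + 1) with hM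
    have hMpos : 0 < M := Nat.pow_pos (by norm_num)
    have h1k : 1 ≤ 2 ^ k := Nat.one_le_two_pow
    have hvlt : 2 ^ k - 1 < M := by
      have : 2 ^ k < M := Nat.pow_lt_pow_right (by norm_num) (by omega)
      omega
    -- card formula
    have hcard : ∀ N : ℕ,
        ((Finset.range N).filter fun n => (s2 (n + 1) : ℤ) - s2 n = d).card
          = N / M + (if (2 ^ k - 1) % M < N % M then 1 else 0) := by
      intro N
      have hset : ((Finset.range N).filter fun n => (s2 (n + 1) : ℤ) - s2 n = d)
          = (Finset.range N).filter (· ≡ (2 ^ k - 1) [MOD M]) := by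
        apply Finset.filter_congr
        intro n _
        simp only [Nat.ModEq, Nat.mod_eq_of_lt hvlt]
        rw [cond_iff, ← mod_succ_iff]
        constructor
        · intro h
          have : padicValNat 2 (n+1) = k := by omega
          exact (padic_eq_iff_mod n k).mp this
        · intro h
          have := (padic_eq_iff_mod n k).mpr h
          omega
      rw [hset, ← Nat.count_eq_card_filter_range, Nat.count_modEq_card _ hMpos]
    -- limit
    have hlim : (2 : ℝ) ^ (d - 2) = 1 / (M : ℝ) := by
      have h2 : d - 2 = -((k : ℤ) + 1) := by omega
      rw [h2, zpow_neg, one_div, hM]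
      norm_cast
    rw [hlim]
    have hMR : (0 : ℝ) < (M : ℝ) := by exact_mod_cast hMpos
    apply tendsto_of_tendsto_of_tendsto_of_le_of_le'
      (g := fun N : ℕ => 1 / (M : ℝ) - 1 / N) (h := fun N : ℕ => 1 / (M : ℝ) + 1 / N)
    · simpa using (tendsto_const_nhds (x := 1 / (M:ℝ))).sub
        tendsto_one_div_atTop_nhds_zero_nat
    · simpa using (tendsto_const_nhds (x := 1 / (M:ℝ))).add
        tendsto_one_div_atTop_nhds_zero_nat
    · filter_upwards [eventually_ge_atTop 1] with N hN
      have hNR : (0 : ℝ) < (N : ℝ) := by exact_mod_cast hN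
      unfold densSeq
      rw [hcard N]
      have hdmR : (M : ℝ) * ((N / M : ℕ) : ℝ) + ((N % M : ℕ) : ℝ) = N := by
        exact_mod_cast Nat.div_add_mod N M
      have hmltR : ((N % M : ℕ) : ℝ) < M := by exact_mod_cast Nat.mod_lt _ hMpos
      have hlb : (N : ℝ) / M - 1 ≤ ((N / M + (if (2 ^ k - 1) % M < N % M then 1 else 0) : ℕ) : ℝ) := by
        have : (N : ℝ) / M - 1 ≤ ((N / M : ℕ) : ℝ) := by
          rw [sub_le_iff_le_add, div_le_iff₀ hMR]
          nlinarith
        split_ifs <;> push_cast <;> linarith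
      have heq : 1 / (M : ℝ) - 1 / N = ((N : ℝ) / M - 1) / N := by
        field_simp
      rw [heq]
      gcongr
    · filter_upwards [eventually_ge_atTop 1] with N hN
      have hNR : (0 : ℝ) < (N : ℝ) := by exact_mod_cast hN
      unfold densSeq
      rw [hcard N]
      have hub : ((N / M + (if (2 ^ k - 1) % M < N % M then 1 else 0) : ℕ) : ℝ) ≤ (N : ℝ) / M + 1 := by
        have h0 : ((N / M : ℕ) : ℝ) ≤ (N : ℝ) / M := Nat.cast_div_le
        split_ifs <;> push_cast <;> linarith
      have heq : 1 / (M : ℝ) + 1 / N = ((N : ℝ) / M + 1) / N := by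
        field_simp
      rw [heq]
      gcongr
  · rw [if_neg hd]
    have : ∀ N : ℕ, densSeq 1 d N = 0 := by
      intro N
      unfold densSeq
      rw [Finset.filter_false_of_mem, Finset.card_empty]
      · simp
      · intro n _
        rw [cond_iff]
        omega
    have : densSeq 1 d = fun _ => (0:ℝ) := funext this
    rw [this]
    exact tendsto_const_nhds
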